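/- Let T > 0, γ > 0, ζ ∈ ℝ, and define θ0(s) := (1 + ζ·exp(2γ(T−s)))/(1 − ζ·exp(2γ(T−s))) and Ψ0(t,s) := exp(−2γ(s−t))·((ζ·exp(2γT) − exp(2γs))/(ζ·exp(2γT) − exp(2γt)))². Fix t ≤ T and assume ζ·exp(2γT) ≠ exp(2γs) for every s ∈ [t,T]. Then ∫_t^T s·θ0(s)²·Ψ0(t,s) ds = [ exp(2γ(t+T))·(4γ²ζ(T²−t²) − ζ²(2γT+1) + 2γT − 1) + exp(4γt)·(1−2γt) + ζ²(2γt+1)·exp(4γT) ] / (4γ²·(exp(2γt) − ζ·exp(2γT))²). -/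

import Mathlib

open Real Set MeasureTheory

theorem stmt_7 (T γ ζ : ℝ) (hT : 0 < T) (hγ : 0 < γ)
    (θ0 : ℝ → ℝ)
    (hθ0 : ∀ s, θ0 s = (1 + ζ * Real.exp (2 * γ * (T - s))) /
                       (1 - ζ * Real.exp (2 * γ * (T - s))))
    (Ψ0 : ℝ → ℝ → ℝ)
    (hΨ0 : ∀ t s, Ψ0 t s = Real.exp (-2 * γ * (s - t)) *
        ((ζ * Real.exp (2 * γ * T) - Real.exp (2 * γ * s)) /
         (ζ * Real.exp (2 * γ * T) - Real.exp (2 * γ * t))) ^ 2)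
    (t : ℝ) (htT : t ≤ T)
    (hnd : ∀ s ∈ Set.Icc t T, ζ * Real.exp (2 * γ * T) ≠ Real.exp (2 * γ * s)) :
    ∫ s in t..T, s * (θ0 s) ^ 2 * Ψ0 t s =
      (Real.exp (2 * γ * (t + T)) * (4 * γ ^ 2 * ζ * (T ^ 2 - t ^ 2)
          - ζ ^ 2 * (2 * γ * T + 1) + 2 * γ * T - 1)
        + Real.exp (4 * γ * t) * (1 - 2 * γ * t)
        + ζ ^ 2 * (2 * γ * t + 1) * Real.exp (4 * γ * T)) /
      (4 * γ ^ 2 * (Real.exp (2 * γ * t) - ζ * Real.exp (2 * γ * T)) ^ 2) := by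
  have hγ0 : γ ≠ 0 := ne_of_gt hγ
  have hD : ζ * Real.exp (2 * γ * T) - Real.exp (2 * γ * t) ≠ 0 :=
    sub_ne_zero.mpr (hnd t ⟨le_refl t, htT⟩)
  set D := ζ * Real.exp (2 * γ * T) - Real.exp (2 * γ * t) with hDdef
  set g : ℝ → ℝ := fun s => Real.exp (2 * γ * t) / D ^ 2 *
      (s * (Real.exp (2 * γ * s) + 2 * ζ * Real.exp (2 * γ * T)
        + ζ ^ 2 * Real.exp (4 * γ * T) * Real.exp (-(2 * γ * s)))) with hg
  set G : ℝ → ℝ := fun s => Real.exp (2 * γ * t) / D ^ 2 *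
      (Real.exp (2 * γ * s) * (2 * γ * s - 1) / (4 * γ ^ 2)
        + ζ * Real.exp (2 * γ * T) * s ^ 2
        - ζ ^ 2 * Real.exp (4 * γ * T) * (2 * γ * s + 1) * Real.exp (-(2 * γ * s))
            / (4 * γ ^ 2)) with hG
  have hcongr : ∫ s in t..T, s * (θ0 s) ^ 2 * Ψ0 t s = ∫ s in t..T, g s := by
    apply intervalIntegral.integral_congr
    intro s hs
    rw [Set.uIcc_of_le htT] at hs
    have hb : Real.exp (2 * γ * s) ≠ 0 := Real.exp_ne_zero _
    have hbc : Real.exp (2 * γ * s) - ζ * Real.exp (2 * γ * T) ≠ 0 :=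
      sub_ne_zero.mpr (fun h => hnd s hs h.symm)
    have e1 : Real.exp (2 * γ * (T - s)) = Real.exp (2 * γ * T) / Real.exp (2 * γ * s) := by
      rw [← Real.exp_sub]; ring_nf
    have e2 : Real.exp (-2 * γ * (s - t)) = Real.exp (2 * γ * t) / Real.exp (2 * γ * s) := by
      rw [← Real.exp_sub]; ring_nf
    have e3 : Real.exp (-(2 * γ * s)) = 1 / Real.exp (2 * γ * s) := by
      rw [Real.exp_neg]; ring
    have e4 : Real.exp (4 * γ * T) = Real.exp (2 * γ * T) ^ 2 := by
      rw [← Real.exp_nat_mul]; ring_nf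
    have hD2 : ζ * Real.exp (2 * γ * T) - Real.exp (2 * γ * t) ≠ 0 := hD
    have hbc2 : ζ * Real.exp (2 * γ * T) - Real.exp (2 * γ * s) ≠ 0 :=
      sub_ne_zero.mpr (hnd s hs)
    simp only [hθ0, hΨ0, hg, e1, e2, e3, e4, hDdef]
    rw [show 1 - ζ * (Real.exp (2 * γ * T) / Real.exp (2 * γ * s))
        = (Real.exp (2 * γ * s) - ζ * Real.exp (2 * γ * T)) / Real.exp (2 * γ * s) by field_simp]
    rw [show 1 + ζ * (Real.exp (2 * γ * T) / Real.exp (2 * γ * s))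
        = (Real.exp (2 * γ * s) + ζ * Real.exp (2 * γ * T)) / Real.exp (2 * γ * s) by field_simp]
    rw [div_div_div_cancel_right₀ hb, div_pow, div_pow,
      show (ζ * Real.exp (2 * γ * T) - Real.exp (2 * γ * s)) ^ 2
        = (Real.exp (2 * γ * s) - ζ * Real.exp (2 * γ * T)) ^ 2 by ring]
    rw [show s * ((Real.exp (2 * γ * s) + ζ * Real.exp (2 * γ * T)) ^ 2
          / (Real.exp (2 * γ * s) - ζ * Real.exp (2 * γ * T)) ^ 2)
        * (Real.exp (2 * γ * t) / Real.exp (2 * γ * s)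
          * ((Real.exp (2 * γ * s) - ζ * Real.exp (2 * γ * T)) ^ 2
            / (ζ * Real.exp (2 * γ * T) - Real.exp (2 * γ * t)) ^ 2))
        = s * (Real.exp (2 * γ * s) + ζ * Real.exp (2 * γ * T)) ^ 2
          * (Real.exp (2 * γ * t) / Real.exp (2 * γ * s)
            / (ζ * Real.exp (2 * γ * T) - Real.exp (2 * γ * t)) ^ 2)
          * ((Real.exp (2 * γ * s) - ζ * Real.exp (2 * γ * T)) ^ 2
            / (Real.exp (2 * γ * s) - ζ * Real.exp (2 * γ * T)) ^ 2) by ring,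
      div_self (pow_ne_zero _ hbc), mul_one]
    field_simp
    ring
  rw [hcongr]
  have hderiv : ∀ s, HasDerivAt G (g s) s := by
    intro s
    have h1 : HasDerivAt (fun s : ℝ => 2 * γ * s) (2 * γ) s := by
      simpa using (hasDerivAt_id s).const_mul (2 * γ)
    have hexp : HasDerivAt (fun s : ℝ => Real.exp (2 * γ * s))
        (2 * γ * Real.exp (2 * γ * s)) s := by
      simpa [mul_comm] using h1.exp
    have hnexp : HasDerivAt (fun s : ℝ => Real.exp (-(2 * γ * s)))
        (-(2 * γ) * Real.exp (-(2 * γ * s))) s := by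
      simpa [mul_comm] using h1.neg.exp
    have hpoly : HasDerivAt (fun s : ℝ => 2 * γ * s - 1) (2 * γ) s := h1.sub_const 1
    have hpoly2 : HasDerivAt (fun s : ℝ => 2 * γ * s + 1) (2 * γ) s := h1.add_const 1
    have hsq : HasDerivAt (fun s : ℝ => s ^ 2) (2 * s) s := by
      simpa using hasDerivAt_pow 2 s
    have hA := ((hexp.mul hpoly).div_const (4 * γ ^ 2))
    have hB := (hsq.const_mul (ζ * Real.exp (2 * γ * T)))
    have hC := (((hpoly2.const_mul (ζ ^ 2 * Real.exp (4 * γ * T))).mul hnexp).div_const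
      (4 * γ ^ 2))
    have := (((hA.add hB).sub hC).const_mul (Real.exp (2 * γ * t) / D ^ 2))
    refine this.congr_deriv ?_
    simp only [hg]
    field_simp
    ring
  have hcont : Continuous g := by
    apply Continuous.mul continuous_const
    apply Continuous.mul continuous_id
    fun_prop
  rw [intervalIntegral.integral_eq_sub_of_hasDerivAt (fun s _ => hderiv s)
    (hcont.intervalIntegrable t T)]
  simp only [hG, hDdef]
  have e3t : Real.exp (-(2 * γ * t)) = 1 / Real.exp (2 * γ * t) := by
    rw [Real.exp_neg]; ring
  have e3T : Real.exp (-(2 * γ * T)) = 1 / Real.exp (2 * γ * T) := by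
    rw [Real.exp_neg]; ring
  have e4t : Real.exp (4 * γ * t) = Real.exp (2 * γ * t) ^ 2 := by
    rw [← Real.exp_nat_mul]; ring_nf
  have e4T : Real.exp (4 * γ * T) = Real.exp (2 * γ * T) ^ 2 := by
    rw [← Real.exp_nat_mul]; ring_nf
  have e5 : Real.exp (2 * γ * (t + T)) = Real.exp (2 * γ * t) * Real.exp (2 * γ * T) := by
    rw [← Real.exp_add]; ring_nf
  have ht0 : Real.exp (2 * γ * t) ≠ 0 := Real.exp_ne_zero _
  have hT0 : Real.exp (2 * γ * T) ≠ 0 := Real.exp_ne_zero _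
  have hD' : Real.exp (2 * γ * t) - ζ * Real.exp (2 * γ * T) ≠ 0 := fun h => hD (by linarith [sub_eq_zero.mp h])
  have hD2 : ζ * Real.exp (2 * γ * T) - Real.exp (2 * γ * t) ≠ 0 := hD
  rw [e3t, e3T, e4t, e4T, e5]
  field_simp
  ring
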